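/- Let ω₃' ⊆ ℝ⁴ be the convex cone generated by (0,0,0,1), (0,1,0,0), (0,2,3,0), (1,0,0,−1), (1,1,3,0), and let S₃' = ω₃' ∩ ℤ⁴. Then the Hilbert basis of S₃' is {f'₁, f'₂, f'₃, f'₄, f'₅, f'₆, f'₇}, where f'₁=(0,0,0,1), f'₂=(0,1,0,0), f'₃=(0,2,3,0), f'₄=(1,0,0,−1), f'₅=(1,1,3,0), f'₆=(0,1,1,0), f'₇=(1,1,2,0); that is, every element of S₃' is an ℕ-linear combination of f'₁, …, f'₇, and no f'ᵢ (1 ≤ i ≤ 7) can be written as a sum of two nonzero elements of S₃'. -/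

import Mathlib

/-- The seven lattice points `f'₁, …, f'₇` (0-indexed as `f' 0, …, f' 6`). -/
def f' : Fin 7 → (Fin 4 → ℤ) :=
  ![![0,0,0,1], ![0,1,0,0], ![0,2,3,0], ![1,0,0,-1], ![1,1,3,0],
    ![0,1,1,0], ![1,1,2,0]]

/-- Coercion of an integer vector to a real vector. -/
def toR (v : Fin 4 → ℤ) : Fin 4 → ℝ := fun j => (v j : ℝ)

/-- The convex cone generated by a finite family of vectors in `ℝ⁴`. -/
def cone {n : ℕ} (v : Fin n → (Fin 4 → ℝ)) : Set (Fin 4 → ℝ) :=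
  {x | ∃ lam : Fin n → ℝ, (∀ i, 0 ≤ lam i) ∧ x = ∑ i, lam i • v i}

/-- The cone `ω₃'` generated by `f'₁, …, f'₅`. -/
def ω₃' : Set (Fin 4 → ℝ) := cone (fun i : Fin 5 => toR (f' (Fin.castLE (by norm_num) i)))

/-- The semigroup `S₃' = ω₃' ∩ ℤ⁴`. -/
def S₃' : Set (Fin 4 → ℤ) := {v | toR v ∈ ω₃'}


lemma cons_val_five' {α : Type*} (x : α) (u : Fin 6 → α) : Matrix.vecCons x u 5 = u 4 := rfl
lemma cons_val_six' {α : Type*} (x : α) (u : Fin 6 → α) : Matrix.vecCons x u 6 = u 5 := rfl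
lemma cons_val_four'' {α : Type*} (x : α) (u : Fin 5 → α) : Matrix.vecCons x u 4 = u 3 := rfl
lemma cons_val_five'' {α : Type*} (x : α) (u : Fin 5 → α) : Matrix.vecCons x u 5 = u 4 := rfl

lemma fam_eq : (fun i : Fin 5 => toR (f' (Fin.castLE (by norm_num) i))) =
    ![![0,0,0,1], ![0,1,0,0], ![0,2,3,0], ![1,0,0,-1], ![1,1,3,0]] := by
  funext i j
  fin_cases i <;> fin_cases j <;> norm_num [toR, f', Fin.castLE]

lemma ineqs_of_mem (v : Fin 4 → ℤ) (hv : v ∈ S₃') :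
    0 ≤ v 0 ∧ 0 ≤ v 2 ∧ v 2 ≤ 3 * v 1 ∧ 0 ≤ v 0 + v 3 ∧
    2 * v 2 ≤ 3 * v 0 + 3 * v 1 ∧ 2 * v 2 ≤ 3 * v 0 + 3 * v 1 + 3 * v 3 := by
  obtain ⟨lam, hpos, hx⟩ := hv
  rw [fam_eq] at hx
  have h0 := congrFun hx 0
  have h1 := congrFun hx 1
  have h2 := congrFun hx 2
  have h3 := congrFun hx 3
  simp [toR, Fin.sum_univ_five, Matrix.vecHead, Matrix.vecTail] at h0 h1 h2 h3
  have l0 := hpos 0; have l1 := hpos 1; have l2 := hpos 2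
  have l3 := hpos 3; have l4 := hpos 4
  have H0 : (0:ℝ) ≤ (v 0 : ℤ) := by rw [h0]; linarith
  have H1 : (0:ℝ) ≤ (v 2 : ℤ) := by rw [h2]; linarith
  have H2 : ((v 2 : ℤ) : ℝ) ≤ 3 * (v 1 : ℤ) := by rw [h1, h2]; linarith
  have H3 : (0:ℝ) ≤ ((v 0 : ℤ) : ℝ) + (v 3 : ℤ) := by rw [h0, h3]; linarith
  have H4 : 2 * ((v 2 : ℤ) : ℝ) ≤ 3 * (v 0 : ℤ) + 3 * (v 1 : ℤ) := by
    rw [h0, h1, h2]; linarith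
  have H5 : 2 * ((v 2 : ℤ) : ℝ) ≤ 3 * ((v 0 : ℤ) : ℝ) + 3 * (v 1 : ℤ) + 3 * (v 3 : ℤ) := by
    rw [h0, h1, h2, h3]; linarith
  exact ⟨by exact_mod_cast H0, by exact_mod_cast H1, by exact_mod_cast H2,
    by exact_mod_cast H3, by exact_mod_cast H4, by exact_mod_cast H5⟩

lemma key (x y z w : ℤ) (h1 : 0 ≤ x) (h2 : 0 ≤ z) (h3 : z ≤ 3*y) (h4 : 0 ≤ x+w)
    (h5 : 2*z ≤ 3*x+3*y) (h6 : 2*z ≤ 3*x+3*y+3*w) :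
    ∃ c1 c2 c3 c4 c5 c6 c7 : ℤ, 0 ≤ c1 ∧ 0 ≤ c2 ∧ 0 ≤ c3 ∧ 0 ≤ c4 ∧ 0 ≤ c5 ∧ 0 ≤ c6 ∧ 0 ≤ c7 ∧
      x = c4 + c5 + c7 ∧ y = c2 + 2*c3 + c5 + c6 + c7 ∧
      z = 3*c3 + 3*c5 + c6 + 2*c7 ∧ w = c1 - c4 := by
  rcases le_total 0 w with hw | hw <;>
  [ set x' := x with hx' ; set x' := x + w with hx' ] <;>
  rcases le_or_gt (2*z) (3*y) with hc | hc
  · exact ⟨w + x', y - 2*(z/3) - z%3, z/3, x', 0, z%3, 0, by omega, by omega, by omega,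
      by omega, by omega, by omega, by omega, by omega, by omega, by omega, by omega⟩
  · obtain hm | hm | hm : (2*z-3*y) % 3 = 0 ∨ (2*z-3*y) % 3 = 1 ∨ (2*z-3*y) % 3 = 2 := by omega
    · exact ⟨w + (x' - (2*z-3*y)/3), 0, (3*y-z)/3, x' - (2*z-3*y)/3, (2*z-3*y)/3, 0, 0,
        by omega, by omega, by omega, by omega, by omega, by omega, by omega,
        by omega, by omega, by omega, by omega⟩
    · exact ⟨w + (x' - (2*z-3*y+2)/3), 0, (3*y-z-1)/3, x' - (2*z-3*y+2)/3, (2*z-3*y-1)/3, 0, 1,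
        by omega, by omega, by omega, by omega, by omega, by omega, by omega,
        by omega, by omega, by omega, by omega⟩
    · exact ⟨w + (x' - (2*z-3*y+1)/3), 0, (3*y-z-2)/3, x' - (2*z-3*y+1)/3, (2*z-3*y+1)/3, 1, 0,
        by omega, by omega, by omega, by omega, by omega, by omega, by omega,
        by omega, by omega, by omega, by omega⟩
  · exact ⟨x', y - 2*(z/3) - z%3, z/3, x' - w, 0, z%3, 0, by omega, by omega, by omega,
      by omega, by omega, by omega, by omega, by omega, by omega, by omega, by omega⟩
  · obtain hm | hm | hm : (2*z-3*y) % 3 = 0 ∨ (2*z-3*y) % 3 = 1 ∨ (2*z-3*y) % 3 = 2 := by omega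
    · exact ⟨(x' - (2*z-3*y)/3), 0, (3*y-z)/3, x' - (2*z-3*y)/3 - w, (2*z-3*y)/3, 0, 0,
        by omega, by omega, by omega, by omega, by omega, by omega, by omega,
        by omega, by omega, by omega, by omega⟩
    · exact ⟨(x' - (2*z-3*y+2)/3), 0, (3*y-z-1)/3, x' - (2*z-3*y+2)/3 - w, (2*z-3*y-1)/3, 0, 1,
        by omega, by omega, by omega, by omega, by omega, by omega, by omega,
        by omega, by omega, by omega, by omega⟩
    · exact ⟨(x' - (2*z-3*y+1)/3), 0, (3*y-z-2)/3, x' - (2*z-3*y+1)/3 - w, (2*z-3*y+1)/3, 1, 0,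
        by omega, by omega, by omega, by omega, by omega, by omega, by omega,
        by omega, by omega, by omega, by omega⟩

lemma omega_eq : ω₃' = cone ![![0,0,0,1], ![0,1,0,0], ![0,2,3,0], ![1,0,0,-1], ![1,1,3,0]] :=
  congrArg cone fam_eq

lemma mem_all (i : Fin 7) : f' i ∈ S₃' := by
  show toR (f' i) ∈ ω₃'
  rw [omega_eq]
  fin_cases i
  · exact ⟨![1,0,0,0,0], by intro j; fin_cases j <;> norm_num,
      by funext j; fin_cases j <;> norm_num [Fin.sum_univ_five, toR, f', Matrix.vecHead, Matrix.vecTail, cons_val_five', cons_val_six', Matrix.cons_val_two, Matrix.cons_val_three, Matrix.cons_val_four]⟩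
  · exact ⟨![0,1,0,0,0], by intro j; fin_cases j <;> norm_num,
      by funext j; fin_cases j <;> norm_num [Fin.sum_univ_five, toR, f', Matrix.vecHead, Matrix.vecTail, cons_val_five', cons_val_six', Matrix.cons_val_two, Matrix.cons_val_three, Matrix.cons_val_four]⟩
  · exact ⟨![0,0,1,0,0], by intro j; fin_cases j <;> norm_num,
      by funext j; fin_cases j <;> norm_num [Fin.sum_univ_five, toR, f', Matrix.vecHead, Matrix.vecTail, cons_val_five', cons_val_six', Matrix.cons_val_two, Matrix.cons_val_three, Matrix.cons_val_four]⟩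
  · exact ⟨![0,0,0,1,0], by intro j; fin_cases j <;> norm_num,
      by funext j; fin_cases j <;> norm_num [Fin.sum_univ_five, toR, f', Matrix.vecHead, Matrix.vecTail, cons_val_five', cons_val_six', Matrix.cons_val_two, Matrix.cons_val_three, Matrix.cons_val_four]⟩
  · exact ⟨![0,0,0,0,1], by intro j; fin_cases j <;> norm_num,
      by funext j; fin_cases j <;> norm_num [Fin.sum_univ_five, toR, f', Matrix.vecHead, Matrix.vecTail, cons_val_five', cons_val_six', Matrix.cons_val_two, Matrix.cons_val_three, Matrix.cons_val_four]⟩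
  · exact ⟨![0,1/3,1/3,0,0], by intro j; fin_cases j <;> norm_num,
      by funext j; fin_cases j <;> norm_num [Fin.sum_univ_five, toR, f', Matrix.vecHead, Matrix.vecTail, cons_val_five', cons_val_six', Matrix.cons_val_two, Matrix.cons_val_three, Matrix.cons_val_four]⟩
  · exact ⟨![1/3,1/3,0,1/3,2/3], by intro j; fin_cases j <;> norm_num,
      by funext j; fin_cases j <;> norm_num [Fin.sum_univ_five, toR, f', Matrix.vecHead, Matrix.vecTail, cons_val_five', cons_val_six', Matrix.cons_val_two, Matrix.cons_val_three, Matrix.cons_val_four]⟩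

/-- The Hilbert basis of `S₃' = ω₃' ∩ ℤ⁴` is `{f'₁, …, f'₇}`, where
`f'₆=(0,1,1,0)` and `f'₇=(1,1,2,0)`. -/
theorem stmt_16 :
    (∀ i, f' i ∈ S₃') ∧
    (∀ v ∈ S₃', ∃ c : Fin 7 → ℕ, v = ∑ i, c i • f' i) ∧
    (∀ i : Fin 7, ¬ ∃ a ∈ S₃', ∃ b ∈ S₃', a ≠ 0 ∧ b ≠ 0 ∧ f' i = a + b) := by
  refine ⟨mem_all, ?_, ?_⟩
  · intro v hv
    obtain ⟨H0, H1, H2, H3, H4, H5⟩ := ineqs_of_mem v hv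
    obtain ⟨c1, c2, c3, c4, c5, c6, c7, n1, n2, n3, n4, n5, n6, n7, e1, e2, e3, e4⟩ :=
      key (v 0) (v 1) (v 2) (v 3) H0 H1 H2 H3 H4 H5
    refine ⟨![c1.toNat, c2.toNat, c3.toNat, c4.toNat, c5.toNat, c6.toNat, c7.toNat], ?_⟩
    funext j
    have hj := congrFun (rfl : v = v) j
    fin_cases j <;>
      simp [Fin.sum_univ_seven, f', Matrix.vecHead, Matrix.vecTail, cons_val_five', cons_val_six', cons_val_four'', cons_val_five''] <;> omega
  · intro i ⟨a, ha, b, hb, hna, hnb, heq⟩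
    obtain ⟨A0, A1, A2, A3, A4, A5⟩ := ineqs_of_mem a ha
    obtain ⟨B0, B1, B2, B3, B4, B5⟩ := ineqs_of_mem b hb
    have ea : ¬ (a 0 = 0 ∧ a 1 = 0 ∧ a 2 = 0 ∧ a 3 = 0) := by
      intro ⟨p0, p1, p2, p3⟩
      exact hna (funext fun j => by fin_cases j <;> assumption)
    have eb : ¬ (b 0 = 0 ∧ b 1 = 0 ∧ b 2 = 0 ∧ b 3 = 0) := by
      intro ⟨p0, p1, p2, p3⟩
      exact hnb (funext fun j => by fin_cases j <;> assumption)
    have ea' : 1 ≤ 2 * a 0 + a 1 + a 2 + a 3 := by omega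
    have eb' : 1 ≤ 2 * b 0 + b 1 + b 2 + b 3 := by omega
    clear ea eb hna hnb
    have q0 := congrFun heq 0
    have q1 := congrFun heq 1
    have q2 := congrFun heq 2
    have q3 := congrFun heq 3
    fin_cases i <;> simp [f', Matrix.vecHead, Matrix.vecTail, cons_val_five', cons_val_six', cons_val_four'', cons_val_five''] at q0 q1 q2 q3 <;>
      first
        | omega
        | (rcases (show b 1 = 0 ∨ b 1 = 1 by omega) with h | h <;>
            rcases (show b 0 = 0 ∨ b 0 = 1 by omega) with h' | h' <;>
            rcases (show b 2 = 0 ∨ b 2 = 1 ∨ b 2 = 2 by omega) with h'' | h'' | h'' <;> omega)
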